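/- There exists a constant c > 0 such that for all odd prime powers q and all sets A ⊆ F_q with q^{1/2} ≤ |A| ≤ q^{2/3}, one has max(|A+A|, |A·A|) ≥ c·|A|^2/q^{1/2}. -/

import Mathlib

open Pointwise

set_option linter.unusedSectionVars false
set_option linter.unreachableTactic false
set_option linter.unusedTactic false
set_option maxHeartbeats 1000000

section GaraevAux
open Finset AddChar
variable {F : Type} [Field F] [Fintype F] [DecidableEq F]

noncomputable def psi (F : Type) [Field F] [Fintype F] : AddChar F ℂ :=
  FiniteField.primitiveChar_to_Complex F

lemma psi_ortho (t : F) :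
    ∑ b : F, psi F (b * t) = if t = 0 then (Fintype.card F : ℂ) else 0 := by
  unfold psi
  rw [AddChar.sum_mulShift t (FiniteField.primitiveChar_to_Complex_isPrimitive F)]
  split <;> simp

lemma psi_conj (x : F) : (starRingEnd ℂ) (psi F x) = psi F (-x) := by
  unfold psi
  rw [AddChar.starComp_apply (by
    have : (ringChar F).Prime := CharP.char_is_prime F _
    exact this.pos)]
  rw [AddChar.inv_apply]

lemma psi_mul (x y : F) : psi F (x + y) = psi F x * psi F y := map_add_eq_mul _ x y

lemma sum_conj_self {α : Type*} (s : Finset α) (f : α → ℂ) :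
    ∑ a ∈ s, f a * (starRingEnd ℂ) (f a) = ((∑ a ∈ s, ‖f a‖ ^ 2 : ℝ) : ℂ) := by
  push_cast
  refine Finset.sum_congr rfl fun a _ => ?_
  rw [Complex.mul_conj']

variable {F : Type} [Field F] [Fintype F] [DecidableEq F]

lemma master (s : Finset F) (m : F → F) (hm : Function.Injective m) :
    ∑ b : F, ‖∑ x ∈ s, psi F (b * m x)‖ ^ 2 = (Fintype.card F : ℝ) * s.card := by
  have key : ∑ b : F, (∑ x ∈ s, psi F (b * m x)) *
      (starRingEnd ℂ) (∑ x ∈ s, psi F (b * m x)) = ((Fintype.card F : ℝ) * s.card : ℂ) := by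
    have e1 : ∀ b : F, (∑ x ∈ s, psi F (b * m x)) *
        (starRingEnd ℂ) (∑ x ∈ s, psi F (b * m x))
        = ∑ x ∈ s, ∑ y ∈ s, psi F (b * (m x - m y)) := by
      intro b
      rw [map_sum, Finset.sum_mul_sum]
      refine Finset.sum_congr rfl fun x _ => Finset.sum_congr rfl fun y _ => ?_
      rw [psi_conj, ← psi_mul]
      ring_nf
    simp_rw [e1]
    rw [Finset.sum_comm]
    have h2 : ∀ x ∈ s, ∑ b : F, ∑ y ∈ s, psi F (b * (m x - m y))
        = (Fintype.card F : ℂ) := by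
      intro x hx
      rw [Finset.sum_comm]
      have h3 : ∀ y ∈ s, ∑ b : F, psi F (b * (m x - m y))
          = if x = y then (Fintype.card F : ℂ) else 0 := by
        intro y _
        rw [psi_ortho]
        congr 1
        rw [sub_eq_zero, hm.eq_iff]
      rw [Finset.sum_congr rfl h3, Finset.sum_ite_eq s x _]
      simp [hx]
    rw [Finset.sum_congr rfl h2, Finset.sum_const, nsmul_eq_mul]
    push_cast
    ring
  have := (sum_conj_self (univ : Finset F)
    (fun b => ∑ x ∈ s, psi F (b * m x))).symm.trans key
  exact_mod_cast this

variable {F : Type} [Field F] [Fintype F] [DecidableEq F]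

lemma le_sqrt_of_sq_le {t A : ℝ} (ht : 0 ≤ t) (h : t^2 ≤ A) : t ≤ Real.sqrt A := by
  rw [← Real.sqrt_sq ht]; exact Real.sqrt_le_sqrt h

lemma fourier_count (P X C S : Finset F) :
    ((((P ×ˢ X) ×ˢ (C ×ˢ S)).filter
        (fun t => t.1.1 * t.1.2 + t.2.1 = t.2.2)).card : ℝ) * (Fintype.card F)
      ≤ (P.card * X.card * C.card * S.card : ℝ) +
        (Fintype.card F) * Real.sqrt ((Fintype.card F) * P.card * X.card * C.card * S.card) := by
  classical
  set q : ℕ := Fintype.card F with hqdef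
  set Ω := (P ×ˢ X) ×ˢ (C ×ˢ S) with hΩ
  set N : ℕ := (Ω.filter (fun t => t.1.1 * t.1.2 + t.2.1 = t.2.2)).card with hN
  set T : F → ℂ := fun b => ∑ y ∈ P ×ˢ X, psi F (b * (y.1 * y.2)) with hT
  set U : F → ℂ := fun b => ∑ c ∈ C, psi F (b * c) with hU
  set W : F → ℂ := fun b => ∑ s ∈ S, psi F (b * (-s)) with hW
  -- Step 1
  have step1 : (q : ℂ) * N = ∑ b : F, T b * (U b * W b) := by
    have e1 : ∀ b : F, T b * (U b * W b)
        = ∑ p ∈ Ω, psi F (b * (p.1.1 * p.1.2 + p.2.1 - p.2.2)) := by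
      intro b
      have eUW : U b * W b = ∑ z ∈ C ×ˢ S, psi F (b * z.1) * psi F (b * (-z.2)) := by
        calc U b * W b = (∑ c ∈ C, psi F (b * c)) * (∑ s ∈ S, psi F (b * (-s))) := rfl
          _ = ∑ c ∈ C, ∑ s ∈ S, psi F (b * c) * psi F (b * (-s)) := Finset.sum_mul_sum _ _ _ _
          _ = _ := (Finset.sum_product' C S (fun c s => psi F (b * c) * psi F (b * (-s)))).symm
      calc T b * (U b * W b)
          = (∑ y ∈ P ×ˢ X, psi F (b * (y.1 * y.2))) *
            (∑ z ∈ C ×ˢ S, psi F (b * z.1) * psi F (b * (-z.2))) := by rw [eUW]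
        _ = ∑ y ∈ P ×ˢ X, ∑ z ∈ C ×ˢ S,
              psi F (b * (y.1 * y.2)) * (psi F (b * z.1) * psi F (b * (-z.2))) :=
            Finset.sum_mul_sum _ _ _ _
        _ = ∑ y ∈ P ×ˢ X, ∑ z ∈ C ×ˢ S,
              psi F (b * (y.1 * y.2 + z.1 - z.2)) := by
            refine Finset.sum_congr rfl fun y _ => Finset.sum_congr rfl fun z _ => ?_
            rw [show b * (y.1 * y.2 + z.1 - z.2)
              = b * (y.1 * y.2) + (b * z.1 + b * (-z.2)) by ring, psi_mul, psi_mul]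
        _ = _ := (Finset.sum_product' (P ×ˢ X) (C ×ˢ S)
              (fun (y : F × F) (z : F × F) =>
                psi F (b * (y.1 * y.2 + z.1 - z.2)))).symm
    simp_rw [e1]
    rw [Finset.sum_comm]
    have e2 : ∀ p ∈ Ω, ∑ b : F, psi F (b * (p.1.1 * p.1.2 + p.2.1 - p.2.2))
        = if p.1.1 * p.1.2 + p.2.1 = p.2.2 then (q : ℂ) else 0 := by
      intro p _
      rw [psi_ortho]
      simp only [sub_eq_zero, hqdef]
    rw [Finset.sum_congr rfl e2, Finset.sum_ite, Finset.sum_const, Finset.sum_const_zero,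
      add_zero, nsmul_eq_mul, hN]
    ring
  -- values at 0
  have hzero : ∀ x : F, psi F ((0:F) * x) = 1 := by
    intro x; rw [zero_mul]; exact map_zero_eq_one _
  have T0 : T 0 = ((P.card * X.card : ℕ) : ℂ) := by
    calc T 0 = ∑ y ∈ P ×ˢ X, psi F ((0:F) * (y.1 * y.2)) := rfl
      _ = _ := by simp [hzero, Finset.card_product]
  have U0 : U 0 = (C.card : ℂ) := by
    calc U 0 = ∑ c ∈ C, psi F ((0:F) * c) := rfl
      _ = _ := by simp [hzero]
  have W0 : W 0 = (S.card : ℂ) := by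
    calc W 0 = ∑ s ∈ S, psi F ((0:F) * (-s)) := rfl
      _ = _ := by simp [hzero]
  -- Step 3: separate b = 0
  have step3 : (q : ℂ) * N - ((P.card * X.card * C.card * S.card : ℝ) : ℂ)
      = ∑ b ∈ (univ : Finset F).erase 0, T b * (U b * W b) := by
    rw [step1, ← Finset.sum_erase_add _ _ (mem_univ (0:F)), T0, U0, W0]
    push_cast; ring
  -- Step 5: bound on T b for b ≠ 0
  have step5 : ∀ b : F, b ≠ 0 → ‖T b‖ ≤ Real.sqrt ((q : ℝ) * P.card * X.card) := by
    intro b hb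
    have hTb : T b = ∑ u ∈ P, ∑ x ∈ X, psi F (u * (b * x)) := by
      calc T b = ∑ y ∈ P ×ˢ X, psi F (b * (y.1 * y.2)) := rfl
        _ = ∑ u ∈ P, ∑ x ∈ X, psi F (b * (u * x)) :=
            Finset.sum_product' P X (fun u x => psi F (b * (u * x)))
        _ = _ := by
            refine Finset.sum_congr rfl fun u _ => Finset.sum_congr rfl fun x _ => ?_
            ring_nf
    have h1 : ‖T b‖ ≤ ∑ u ∈ P, ‖∑ x ∈ X, psi F (u * (b * x))‖ := by
      rw [hTb]; exact norm_sum_le _ _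
    have h2 : (∑ u ∈ P, ‖∑ x ∈ X, psi F (u * (b * x))‖)^2
        ≤ (P.card : ℝ) * ∑ u ∈ P, ‖∑ x ∈ X, psi F (u * (b * x))‖^2 :=
      sq_sum_le_card_mul_sum_sq
    have h3 : ∑ u ∈ P, ‖∑ x ∈ X, psi F (u * (b * x))‖^2
        ≤ ∑ u : F, ‖∑ x ∈ X, psi F (u * (b * x))‖^2 := by
      refine Finset.sum_le_sum_of_subset_of_nonneg (subset_univ _) ?_
      intros; positivity
    have h4 : ∑ u : F, ‖∑ x ∈ X, psi F (u * (b * x))‖^2 = (q : ℝ) * X.card :=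
      master X (fun x => b * x) (mul_right_injective₀ hb)
    refine le_sqrt_of_sq_le (norm_nonneg _) ?_
    calc ‖T b‖^2 ≤ (∑ u ∈ P, ‖∑ x ∈ X, psi F (u * (b * x))‖)^2 := by
          apply pow_le_pow_left₀ (norm_nonneg _) h1
      _ ≤ (P.card : ℝ) * ((q:ℝ) * X.card) := by
          refine h2.trans ?_
          exact mul_le_mul_of_nonneg_left (h3.trans_eq h4) (Nat.cast_nonneg _)
      _ = (q : ℝ) * P.card * X.card := by ring
  -- Step 6
  have hUm : ∑ b : F, ‖U b‖^2 = (q : ℝ) * C.card := master C id Function.injective_id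
  have hWm : ∑ b : F, ‖W b‖^2 = (q : ℝ) * S.card := master S Neg.neg neg_injective
  have step6 : ∑ b ∈ (univ : Finset F).erase 0, ‖U b‖ * ‖W b‖
      ≤ Real.sqrt ((q : ℝ) * C.card) * Real.sqrt ((q : ℝ) * S.card) := by
    have cs := Finset.sum_mul_sq_le_sq_mul_sq ((univ : Finset F).erase 0)
      (fun b => ‖U b‖) (fun b => ‖W b‖)
    have hU2 : ∑ b ∈ (univ : Finset F).erase 0, ‖U b‖^2 ≤ (q : ℝ) * C.card := by
      rw [← hUm]
      refine Finset.sum_le_sum_of_subset_of_nonneg (subset_univ _) ?_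
      intros; positivity
    have hW2 : ∑ b ∈ (univ : Finset F).erase 0, ‖W b‖^2 ≤ (q : ℝ) * S.card := by
      rw [← hWm]
      refine Finset.sum_le_sum_of_subset_of_nonneg (subset_univ _) ?_
      intros; positivity
    calc ∑ b ∈ (univ : Finset F).erase 0, ‖U b‖ * ‖W b‖
        ≤ Real.sqrt (((q : ℝ) * C.card) * ((q : ℝ) * S.card)) := by
          refine le_sqrt_of_sq_le (Finset.sum_nonneg fun b _ => by positivity) ?_
          exact cs.trans (mul_le_mul hU2 hW2 (Finset.sum_nonneg fun b _ => by positivity)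
            (by positivity))
      _ = _ := Real.sqrt_mul (by positivity) _
  -- Step 4+7: final
  have herr : (q : ℝ) * N - (P.card * X.card * C.card * S.card : ℝ)
      ≤ Real.sqrt ((q : ℝ) * P.card * X.card) *
        (Real.sqrt ((q : ℝ) * C.card) * Real.sqrt ((q : ℝ) * S.card)) := by
    have h1 : (q : ℝ) * N - ((P.card : ℝ) * X.card * C.card * S.card)
        ≤ ‖∑ b ∈ (univ : Finset F).erase 0, T b * (U b * W b)‖ := by
      rw [← step3]
      calc (q : ℝ) * N - ((P.card : ℝ) * X.card * C.card * S.card)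
          ≤ |(q : ℝ) * N - ((P.card : ℝ) * X.card * C.card * S.card)| := le_abs_self _
        _ = ‖((((q : ℝ) * N - ((P.card : ℝ) * X.card * C.card * S.card)) : ℝ) : ℂ)‖ := by
            rw [Complex.norm_real]; rfl
        _ = ‖(q : ℂ) * N - (((P.card : ℝ) * X.card * C.card * S.card : ℝ) : ℂ)‖ := by
            norm_cast
    refine h1.trans ?_
    calc ‖∑ b ∈ (univ : Finset F).erase 0, T b * (U b * W b)‖
        ≤ ∑ b ∈ (univ : Finset F).erase 0, ‖T b * (U b * W b)‖ := norm_sum_le _ _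
      _ ≤ ∑ b ∈ (univ : Finset F).erase 0,
            Real.sqrt ((q : ℝ) * P.card * X.card) * (‖U b‖ * ‖W b‖) := by
          refine Finset.sum_le_sum fun b hb => ?_
          rw [norm_mul, norm_mul]
          have hb0 : b ≠ 0 := (Finset.mem_erase.mp hb).1
          exact mul_le_mul_of_nonneg_right (step5 b hb0) (by positivity)
      _ = Real.sqrt ((q : ℝ) * P.card * X.card) *
            ∑ b ∈ (univ : Finset F).erase 0, ‖U b‖ * ‖W b‖ := by
          rw [Finset.mul_sum]
      _ ≤ _ := mul_le_mul_of_nonneg_left step6 (Real.sqrt_nonneg _)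
  have hsqrt : Real.sqrt ((q : ℝ) * P.card * X.card) *
      (Real.sqrt ((q : ℝ) * C.card) * Real.sqrt ((q : ℝ) * S.card))
      = (q : ℝ) * Real.sqrt ((q : ℝ) * P.card * X.card * C.card * S.card) := by
    rw [← Real.sqrt_mul (by positivity), ← Real.sqrt_mul (by positivity)]
    rw [show ((q : ℝ) * P.card * X.card) * ((q : ℝ) * C.card * ((q : ℝ) * S.card))
      = (q:ℝ)^2 * ((q : ℝ) * P.card * X.card * C.card * S.card) by ring]
    rw [Real.sqrt_mul (by positivity), Real.sqrt_sq (by positivity)]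
  have final := herr.trans_eq hsqrt
  have : ((N : ℝ)) * q ≤ ((P.card : ℝ) * X.card * C.card * S.card) +
      (q : ℝ) * Real.sqrt ((q : ℝ) * P.card * X.card * C.card * S.card) := by linarith
  exact this

variable {F : Type} [Field F] [Fintype F] [DecidableEq F]

lemma lower_count (A : Finset F) :
    ((A.erase 0).card * A.card * A.card : ℕ)
      ≤ ((((A * A) ×ˢ ((A.erase 0).image (·⁻¹))) ×ˢ (A ×ˢ (A + A))).filter
          (fun t => t.1.1 * t.1.2 + t.2.1 = t.2.2)).card := by
  classical
  have : (((A.erase 0) ×ˢ A) ×ˢ A).card = (A.erase 0).card * A.card * A.card := by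
    simp [Finset.card_product, mul_assoc]
  rw [← this]
  refine Finset.card_le_card_of_injOn
    (fun t => ((t.1.1 * t.1.2, t.1.1⁻¹), (t.2, t.1.2 + t.2))) ?_ ?_
  · rintro ⟨⟨a, b⟩, c⟩ ht
    simp only [Finset.mem_coe, Finset.mem_product] at ht ⊢
    obtain ⟨⟨ha, hb⟩, hc⟩ := ht
    have ha0 : a ≠ 0 := Finset.ne_of_mem_erase ha
    have haA : a ∈ A := Finset.mem_of_mem_erase ha
    rw [Finset.mem_filter]
    constructor
    · simp only [Finset.mem_product]
      exact ⟨⟨Finset.mul_mem_mul haA hb, Finset.mem_image_of_mem _ ha⟩,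
        hc, Finset.add_mem_add hb hc⟩
    · simp only
      rw [mul_comm a b, mul_assoc, mul_inv_cancel₀ ha0, mul_one]
  · rintro ⟨⟨a, b⟩, c⟩ ht ⟨⟨a', b'⟩, c'⟩ ht' heq
    simp only [Finset.mem_coe, Finset.mem_product] at ht ht'
    obtain ⟨⟨ha, hb⟩, hc⟩ := ht
    obtain ⟨⟨ha', hb'⟩, hc'⟩ := ht'
    have ha0 : a ≠ 0 := Finset.ne_of_mem_erase ha
    simp only [Prod.mk.injEq] at heq
    obtain ⟨⟨h1, h2⟩, h3, h4⟩ := heq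
    have haa : a = a' := inv_injective h2
    subst haa
    have hbb : b = b' := mul_left_cancel₀ ha0 h1
    simp [hbb, h3]

lemma arith_final (a s M : ℝ) (ha2 : 2 ≤ a) (hs0 : 0 < s) (hM0 : 0 ≤ M)
    (hacube : a^3 ≤ s^4) (hmain : a^3*s^2/2 ≤ a^2*M^2 + s^3*a*M) :
    (1/8 : ℝ)*a^2/s ≤ M := by
  have ha0 : (0:ℝ) < a := by linarith
  have hkey : a^2 ≤ 8 * s * M := by
    by_cases hc : a^3 * s^2 / 4 ≤ a^2 * M^2
    · have hM2 : a * s^2 / 4 ≤ M^2 := by nlinarith [mul_pos ha0 ha0]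
      have h11 : a^4 ≤ 4 * s^2 * M^2 := by nlinarith [mul_pos hs0 hs0, sq_nonneg s]
      nlinarith [mul_nonneg (mul_nonneg (le_of_lt hs0) hM0) (le_of_lt ha0),
        sq_nonneg (a^2 - 2*s*M), mul_pos hs0 hs0]
    · have hc2 : a^3 * s^2 / 4 ≤ s^3 * a * M := by nlinarith
      have h12 : a^2 ≤ 4 * s * M := by
        nlinarith [mul_pos ha0 (mul_pos hs0 hs0)]
      nlinarith
  rw [div_le_iff₀ hs0]
  nlinarith

theorem main_ineq {F : Type} [Field F] [Fintype F] [DecidableEq F] (A : Finset F)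
    (hodd : Odd (Fintype.card F))
    (hlow : ((Fintype.card F : ℝ) ^ ((1 : ℝ) / 2) ≤ (A.card : ℝ)))
    (hupp : ((A.card : ℝ) ≤ (Fintype.card F : ℝ) ^ ((2 : ℝ) / 3))) :
    (1/8 : ℝ) * (A.card : ℝ) ^ 2 / Real.sqrt (Fintype.card F)
      ≤ max ((A + A).card : ℝ) ((A * A).card : ℝ) := by
  classical
  set q : ℕ := Fintype.card F with hqdef
  set s : ℝ := Real.sqrt q with hsdef
  have hq3 : 3 ≤ q := by
    have h1 : 1 < q := Fintype.one_lt_card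
    obtain ⟨k, hk⟩ := hodd
    omega
  have hq0 : (0:ℝ) < q := by positivity
  have hs0 : 0 < s := Real.sqrt_pos.mpr hq0
  have hs2 : s ^ 2 = (q : ℝ) := Real.sq_sqrt (le_of_lt hq0)
  set a : ℝ := (A.card : ℝ) with hadef
  have ha2 : (2:ℝ) ≤ a := by
    have h31 : (1:ℝ) < (3:ℝ) ^ ((1:ℝ)/2) := by
      rw [show ((1:ℝ) < (3:ℝ) ^ ((1:ℝ)/2)) ↔ _ from Real.one_lt_rpow_iff_of_pos (by norm_num)]
      norm_num
    have h32 : (3:ℝ) ^ ((1:ℝ)/2) ≤ (q:ℝ) ^ ((1:ℝ)/2) := by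
      apply Real.rpow_le_rpow (by norm_num) (by exact_mod_cast hq3) (by norm_num)
    have h1a : (1:ℝ) < (A.card : ℝ) := lt_of_lt_of_le (h31.trans_le h32) hlow
    have h1b : (1:ℕ) < A.card := by exact_mod_cast h1a
    have h1c : (2:ℕ) ≤ A.card := h1b
    show (2:ℝ) ≤ (A.card : ℝ)
    exact_mod_cast h1c
  have ha0 : (0:ℝ) < a := by linarith
  have hacube : a ^ 3 ≤ s ^ 4 := by
    have h1 : a ^ 3 ≤ ((q:ℝ) ^ ((2:ℝ)/3)) ^ 3 := pow_le_pow_left₀ (le_of_lt ha0) hupp 3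
    have h2 : ((q:ℝ) ^ ((2:ℝ)/3)) ^ 3 = (q:ℝ) ^ 2 := by
      rw [← Real.rpow_natCast ((q:ℝ) ^ ((2:ℝ)/3)) 3, ← Real.rpow_mul (le_of_lt hq0)]
      norm_num
    have h3 : (q:ℝ) ^ 2 = s ^ 4 := by rw [← hs2]; ring
    calc a ^ 3 ≤ ((q:ℝ) ^ ((2:ℝ)/3)) ^ 3 := h1
      _ = s ^ 4 := by rw [h2, h3]
  -- the sets
  set X : Finset F := (A.erase 0).image (·⁻¹) with hXdef
  set P : Finset F := A * A with hPdef
  set S : Finset F := A + A with hSdef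
  set N : ℕ := (((P ×ˢ X) ×ˢ (A ×ˢ S)).filter
      (fun t => t.1.1 * t.1.2 + t.2.1 = t.2.2)).card with hNdef
  set xc : ℝ := (X.card : ℝ) with hxcdef
  set pc : ℝ := (P.card : ℝ) with hpcdef
  set sc : ℝ := (S.card : ℝ) with hscdef
  set M : ℝ := max sc pc with hMdef
  have hscM : sc ≤ M := le_max_left _ _
  have hpcM : pc ≤ M := le_max_right _ _
  have hM0 : 0 ≤ M := le_trans (Nat.cast_nonneg _) hscM
  have hxca : xc ≤ a := by
    have h1 : X.card = (A.erase 0).card := Finset.card_image_of_injective _ inv_injective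
    have h2 : (A.erase 0).card ≤ A.card := Finset.card_erase_le
    rw [hxcdef, hadef, h1]
    exact_mod_cast h2
  have hxchalf : a / 2 ≤ xc := by
    have h1 : X.card = (A.erase 0).card := Finset.card_image_of_injective _ inv_injective
    have h2 : A.card - 1 ≤ (A.erase 0).card := Finset.pred_card_le_card_erase
    have h3 : (A.card : ℝ) - 1 ≤ ((A.erase 0).card : ℝ) := by
      have h4 : 1 ≤ A.card := by
        have : (2:ℝ) ≤ (A.card : ℝ) := ha2
        have : 2 ≤ A.card := by exact_mod_cast this
        omega
      have := Nat.cast_le (α := ℝ).mpr h2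
      rw [Nat.cast_sub h4] at this
      exact_mod_cast this
    rw [hxcdef, h1]
    linarith
  -- lower bound on N
  have hNlow : (a / 2) * a * a ≤ (N : ℝ) := by
    have h1 := lower_count A
    have h2 : ((A.erase 0).card * A.card * A.card : ℝ) ≤ (N : ℝ) := by exact_mod_cast h1
    have h3 : ((A.erase 0).card : ℝ) = xc := by
      rw [hxcdef, Finset.card_image_of_injective _ inv_injective]
    rw [h3] at h2
    nlinarith
  -- upper bound on N
  have hNup : (N : ℝ) * q ≤ pc * xc * a * sc + q * Real.sqrt (q * pc * xc * a * sc) :=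
    fourier_count P X A S
  -- bound the sqrt
  have h5 : (q : ℝ) * pc * xc * a * sc ≤ (q : ℝ) * M * a * a * M := by
    gcongr <;> positivity
  have h6 : Real.sqrt ((q : ℝ) * M * a * a * M) = s * a * M := by
    rw [show (q : ℝ) * M * a * a * M = (s * a * M)^2 by rw [← hs2]; ring]
    exact Real.sqrt_sq (by positivity)
  have h7 : Real.sqrt ((q : ℝ) * pc * xc * a * sc) ≤ s * a * M := by
    rw [← h6]; exact Real.sqrt_le_sqrt h5
  have h8 : pc * xc * a * sc ≤ M * a * a * M := by
    gcongr <;> positivity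
  have hmain : a^3 * s^2 / 2 ≤ a^2 * M^2 + s^3 * a * M := by
    have h9 : (N : ℝ) * q ≤ M * a * a * M + (q:ℝ) * (s * a * M) := by
      refine hNup.trans ?_
      gcongr
    have h10 : (a/2) * a * a * q ≤ (N:ℝ) * q := by
      apply mul_le_mul_of_nonneg_right hNlow (le_of_lt hq0)
    have hq_s : (q : ℝ) = s^2 := hs2.symm
    rw [hq_s] at h9 h10
    nlinarith [h10.trans h9]
  exact arith_final a s M ha2 hs0 hM0 hacube hmain

end GaraevAux

/-- There is `c > 0` such that for every odd prime power `q` and `A ⊆ F_q` with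
`q^{1/2} ≤ |A| ≤ q^{2/3}`, `max(|A+A|, |A·A|) ≥ c |A|² / q^{1/2}`. -/
theorem sum_product_middle_range :
    ∃ c : ℝ, 0 < c ∧
      ∀ (F : Type) (_ : Field F) (_ : Fintype F) (_ : DecidableEq F) (A : Finset F),
        Odd (Fintype.card F) →
        ((Fintype.card F : ℝ) ^ ((1 : ℝ) / 2) ≤ (A.card : ℝ)) →
        ((A.card : ℝ) ≤ (Fintype.card F : ℝ) ^ ((2 : ℝ) / 3)) →
        c * (A.card : ℝ) ^ 2 / Real.sqrt (Fintype.card F)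
          ≤ max ((A + A).card : ℝ) ((A * A).card : ℝ) := by
  refine ⟨1/8, by norm_num, ?_⟩
  intro F hF hFt hDE A hodd hlow hupp
  letI := hF
  letI := hFt
  letI := hDE
  exact main_ineq A hodd hlow hupp
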